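/- Let p be an odd prime not dividing m₁m₂m₃, and suppose the Legendre symbol conditions (m₁m₂/p) = (m₂m₃/p) = (m₃m₁/p) = 1 fail (i.e. at least one of these symbols is not 1). Then the exponential sum S_p(m,n) = Σ_{a∈𝔽_p^×} Σ_{x,y∈𝔽_p³} e_p(a(x₁y₁²+x₂y₂²+x₃y₃²) + m·x + n·y) vanishes. -/

import Mathlib

/-- e_q(t) = exp(2πit/q). -/
noncomputable def eChar (q : ℕ) (t : ℤ) : ℂ :=
  Complex.exp (2 * Real.pi * Complex.I * (t : ℂ) / (q : ℂ))

/-- The complete exponential sum S_q(m,n) for F(x,y) = x₁y₁² + x₂y₂² + x₃y₃²: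
S_q(m,n) = Σ*_{a mod q} Σ_{x,y mod q} e_q(aF(x,y) + m·x + n·y). -/
noncomputable def expSum (q : ℕ) (m₁ m₂ m₃ n₁ n₂ n₃ : ℤ) : ℂ :=
  ∑ a ∈ (Finset.range q).filter (fun a => Nat.Coprime a q),
    ∑ x₁ ∈ Finset.range q, ∑ x₂ ∈ Finset.range q, ∑ x₃ ∈ Finset.range q,
      ∑ y₁ ∈ Finset.range q, ∑ y₂ ∈ Finset.range q, ∑ y₃ ∈ Finset.range q,
        eChar q ((a : ℤ) * ((x₁ : ℤ) * (y₁ : ℤ) ^ 2 + (x₂ : ℤ) * (y₂ : ℤ) ^ 2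
            + (x₃ : ℤ) * (y₃ : ℤ) ^ 2)
          + m₁ * (x₁ : ℤ) + m₂ * (x₂ : ℤ) + m₃ * (x₃ : ℤ)
          + n₁ * (y₁ : ℤ) + n₂ * (y₂ : ℤ) + n₃ * (y₃ : ℤ))

lemma eChar_add (q : ℕ) (s t : ℤ) : eChar q (s + t) = eChar q s * eChar q t := by
  unfold eChar
  rw [← Complex.exp_add]
  congr 1
  push_cast
  ring

lemma eChar_nat_mul (q : ℕ) (c : ℤ) (x : ℕ) : eChar q (c * x) = eChar q c ^ x := by
  unfold eChar
  rw [← Complex.exp_nat_mul]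
  congr 1
  push_cast
  ring

lemma eChar_ne_one (q : ℕ) (hq : q ≠ 0) (c : ℤ) (hc : ¬ (q : ℤ) ∣ c) : eChar q c ≠ 1 := by
  unfold eChar
  intro h1
  rw [Complex.exp_eq_one_iff] at h1
  obtain ⟨n, hn⟩ := h1
  apply hc
  refine ⟨n, ?_⟩
  have hq' : (q : ℂ) ≠ 0 := Nat.cast_ne_zero.mpr hq
  field_simp at hn
  have h2 : (c : ℂ) = ((q * n : ℤ) : ℂ) := by
    push_cast
    have := Complex.two_pi_I_ne_zero
    have h3 : 2 * (Real.pi : ℂ) * Complex.I * (c : ℂ) = 2 * (Real.pi : ℂ) * Complex.I * ((q : ℂ) * n) := by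
      linear_combination (2 * (Real.pi : ℂ) * Complex.I) * hn
    exact mul_left_cancel₀ this h3
  exact_mod_cast h2

lemma sum_eChar_mul (q : ℕ) (hq : q ≠ 0) (c : ℤ) (hc : ¬ (q : ℤ) ∣ c) :
    ∑ x ∈ Finset.range q, eChar q (c * x) = 0 := by
  have hz : eChar q c ≠ 1 := eChar_ne_one q hq c hc
  calc ∑ x ∈ Finset.range q, eChar q (c * x) = ∑ x ∈ Finset.range q, eChar q c ^ x := by
        exact Finset.sum_congr rfl fun x _ => eChar_nat_mul q c x
    _ = (eChar q c ^ q - 1) / (eChar q c - 1) := geom_sum_eq hz q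
    _ = 0 := by
        have : eChar q c ^ q = 1 := by
          rw [← eChar_nat_mul]
          unfold eChar
          have hq' : (q : ℂ) ≠ 0 := Nat.cast_ne_zero.mpr hq
          have : (2 * (Real.pi:ℂ) * Complex.I * ((c * (q:ℕ) : ℤ) : ℂ) / (q : ℂ)) =
              (c : ℂ) * (2 * Real.pi * Complex.I) := by
            push_cast
            field_simp
          rw [this]
          exact_mod_cast Complex.exp_int_mul_two_pi_mul_I c
        rw [this]
        simp

lemma sum_eChar_linear (q : ℕ) (hq : q ≠ 0) (c d : ℤ) (hc : ¬ (q : ℤ) ∣ c) :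
    ∑ x ∈ Finset.range q, eChar q (c * x + d) = 0 := by
  calc ∑ x ∈ Finset.range q, eChar q (c * x + d)
      = ∑ x ∈ Finset.range q, eChar q (c * x) * eChar q d :=
        Finset.sum_congr rfl fun x _ => eChar_add q _ _
    _ = (∑ x ∈ Finset.range q, eChar q (c * x)) * eChar q d := by rw [Finset.sum_mul]
    _ = 0 := by rw [sum_eChar_mul q hq c hc, zero_mul]

lemma rot6 (q : ℕ) (f : ℕ → ℕ → ℕ → ℕ → ℕ → ℕ → ℂ) :
    (∑ a ∈ Finset.range q, ∑ b ∈ Finset.range q, ∑ c ∈ Finset.range q,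
      ∑ d ∈ Finset.range q, ∑ e ∈ Finset.range q, ∑ g ∈ Finset.range q, f a b c d e g)
    = ∑ b ∈ Finset.range q, ∑ c ∈ Finset.range q, ∑ d ∈ Finset.range q,
      ∑ e ∈ Finset.range q, ∑ g ∈ Finset.range q, ∑ a ∈ Finset.range q, f a b c d e g := by
  conv_lhs => rw [Finset.sum_comm]
  refine Finset.sum_congr rfl fun b _ => ?_
  conv_lhs => rw [Finset.sum_comm]
  refine Finset.sum_congr rfl fun c _ => ?_
  conv_lhs => rw [Finset.sum_comm]
  refine Finset.sum_congr rfl fun d _ => ?_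
  conv_lhs => rw [Finset.sum_comm]
  refine Finset.sum_congr rfl fun e _ => ?_
  conv_lhs => rw [Finset.sum_comm]

lemma rot63 (q : ℕ) (f : ℕ → ℕ → ℕ → ℕ → ℕ → ℕ → ℂ) :
    (∑ a ∈ Finset.range q, ∑ b ∈ Finset.range q, ∑ c ∈ Finset.range q,
      ∑ d ∈ Finset.range q, ∑ e ∈ Finset.range q, ∑ g ∈ Finset.range q, f a b c d e g)
    = ∑ d ∈ Finset.range q, ∑ e ∈ Finset.range q, ∑ g ∈ Finset.range q,
      ∑ a ∈ Finset.range q, ∑ b ∈ Finset.range q, ∑ c ∈ Finset.range q, f a b c d e g :=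
  (rot6 q f).trans ((rot6 q fun b c d e g a => f a b c d e g).trans
    (rot6 q fun c d e g a b => f a b c d e g))

lemma rot3 (q : ℕ) (f : ℕ → ℕ → ℕ → ℂ) :
    (∑ a ∈ Finset.range q, ∑ b ∈ Finset.range q, ∑ c ∈ Finset.range q, f a b c)
    = ∑ b ∈ Finset.range q, ∑ c ∈ Finset.range q, ∑ a ∈ Finset.range q, f a b c := by
  conv_lhs => rw [Finset.sum_comm]
  refine Finset.sum_congr rfl fun b _ => ?_
  conv_lhs => rw [Finset.sum_comm]

lemma pairSolve (p : ℕ) [Fact p.Prime] (mi mj : ℤ) (hij : ¬ (p : ℤ) ∣ mi * mj)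
    (hleg : legendreSym p (mi * mj) ≠ 1) (a : ℤ) :
    (∀ Y : ℤ, ¬ (p : ℤ) ∣ (a * Y ^ 2 + mi)) ∨ (∀ Y : ℤ, ¬ (p : ℤ) ∣ (a * Y ^ 2 + mj)) := by
  by_contra h
  push_neg at h
  obtain ⟨⟨Y₁, h₁⟩, Y₂, h₂⟩ := h
  apply hleg
  have h0 : ((mi * mj : ℤ) : ZMod p) ≠ 0 :=
    fun h0' => hij ((ZMod.intCast_zmod_eq_zero_iff_dvd _ _).mp h0')
  rw [legendreSym.eq_one_iff p h0]
  rw [← ZMod.intCast_zmod_eq_zero_iff_dvd] at h₁ h₂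
  push_cast at h₁ h₂
  refine ⟨(a : ZMod p) * (Y₁ : ℤ) * (Y₂ : ℤ), ?_⟩
  have e₁ : ((mi : ℤ) : ZMod p) = -((a : ZMod p) * ((Y₁ : ℤ) : ZMod p) ^ 2) := by
    linear_combination h₁
  have e₂ : ((mj : ℤ) : ZMod p) = -((a : ZMod p) * ((Y₂ : ℤ) : ZMod p) ^ 2) := by
    linear_combination h₂
  push_cast
  rw [e₁, e₂]
  ring

/-- If p is an odd prime, p ∤ m₁m₂m₃, and the Legendre symbol conditions
(m₁m₂/p) = (m₂m₃/p) = (m₃m₁/p) = 1 fail, then S_p(m,n) = 0. -/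
theorem stmt12 (p : ℕ) [hp : Fact p.Prime] (hp2 : p ≠ 2)
    (m₁ m₂ m₃ n₁ n₂ n₃ : ℤ) (hm : ¬ (p : ℤ) ∣ m₁ * m₂ * m₃)
    (hleg : ¬ (legendreSym p (m₁ * m₂) = 1 ∧ legendreSym p (m₂ * m₃) = 1 ∧
      legendreSym p (m₃ * m₁) = 1)) :
    expSum p m₁ m₂ m₃ n₁ n₂ n₃ = 0 := by
  have hq : p ≠ 0 := hp.out.ne_zero
  have h12 : ¬ (p : ℤ) ∣ m₁ * m₂ := fun h => hm (Dvd.dvd.mul_right h m₃)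
  have h23 : ¬ (p : ℤ) ∣ m₂ * m₃ := fun h => hm (by
    have : m₁ * m₂ * m₃ = m₁ * (m₂ * m₃) := by ring
    rw [this]; exact Dvd.dvd.mul_left h m₁)
  have h31 : ¬ (p : ℤ) ∣ m₃ * m₁ := fun h => hm (by
    have : m₁ * m₂ * m₃ = (m₃ * m₁) * m₂ := by ring
    rw [this]; exact Dvd.dvd.mul_right h m₂)
  unfold expSum
  apply Finset.sum_eq_zero
  intro a _
  have key : (∀ Y : ℤ, ¬ (p : ℤ) ∣ ((a : ℤ) * Y ^ 2 + m₁)) ∨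
      (∀ Y : ℤ, ¬ (p : ℤ) ∣ ((a : ℤ) * Y ^ 2 + m₂)) ∨
      (∀ Y : ℤ, ¬ (p : ℤ) ∣ ((a : ℤ) * Y ^ 2 + m₃)) := by
    by_cases L12 : legendreSym p (m₁ * m₂) = 1
    · by_cases L23 : legendreSym p (m₂ * m₃) = 1
      · have L31 : legendreSym p (m₃ * m₁) ≠ 1 := fun h => hleg ⟨L12, L23, h⟩
        rcases pairSolve p m₃ m₁ h31 L31 (a : ℤ) with h | h
        · exact Or.inr (Or.inr h)
        · exact Or.inl h
      · rcases pairSolve p m₂ m₃ h23 L23 (a : ℤ) with h | h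
        · exact Or.inr (Or.inl h)
        · exact Or.inr (Or.inr h)
    · rcases pairSolve p m₁ m₂ h12 L12 (a : ℤ) with h | h
      · exact Or.inl h
      · exact Or.inr (Or.inl h)
  rw [rot63 p (fun x₁ x₂ x₃ y₁ y₂ y₃ => eChar p ((a : ℤ) * ((x₁ : ℤ) * (y₁ : ℤ) ^ 2
      + (x₂ : ℤ) * (y₂ : ℤ) ^ 2 + (x₃ : ℤ) * (y₃ : ℤ) ^ 2)
      + m₁ * (x₁ : ℤ) + m₂ * (x₂ : ℤ) + m₃ * (x₃ : ℤ)
      + n₁ * (y₁ : ℤ) + n₂ * (y₂ : ℤ) + n₃ * (y₃ : ℤ)))]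
  refine Finset.sum_eq_zero fun y₁ _ => Finset.sum_eq_zero fun y₂ _ =>
    Finset.sum_eq_zero fun y₃ _ => ?_
  rcases key with hk | hk | hk
  · rw [rot3 p (fun x₁ x₂ x₃ => eChar p ((a : ℤ) * ((x₁ : ℤ) * (y₁ : ℤ) ^ 2
        + (x₂ : ℤ) * (y₂ : ℤ) ^ 2 + (x₃ : ℤ) * (y₃ : ℤ) ^ 2)
        + m₁ * (x₁ : ℤ) + m₂ * (x₂ : ℤ) + m₃ * (x₃ : ℤ)
        + n₁ * (y₁ : ℤ) + n₂ * (y₂ : ℤ) + n₃ * (y₃ : ℤ)))]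
    refine Finset.sum_eq_zero fun x₂ _ => Finset.sum_eq_zero fun x₃ _ => ?_
    refine (Finset.sum_congr rfl fun x₁ _ => ?_).trans
      (sum_eChar_linear p hq ((a : ℤ) * (y₁ : ℤ) ^ 2 + m₁)
        ((a : ℤ) * ((x₂ : ℤ) * (y₂ : ℤ) ^ 2 + (x₃ : ℤ) * (y₃ : ℤ) ^ 2)
          + m₂ * (x₂ : ℤ) + m₃ * (x₃ : ℤ) + n₁ * (y₁ : ℤ) + n₂ * (y₂ : ℤ) + n₃ * (y₃ : ℤ))
        (hk (y₁ : ℤ)))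
    congr 1
    ring
  · rw [rot3 p (fun x₁ x₂ x₃ => eChar p ((a : ℤ) * ((x₁ : ℤ) * (y₁ : ℤ) ^ 2
        + (x₂ : ℤ) * (y₂ : ℤ) ^ 2 + (x₃ : ℤ) * (y₃ : ℤ) ^ 2)
        + m₁ * (x₁ : ℤ) + m₂ * (x₂ : ℤ) + m₃ * (x₃ : ℤ)
        + n₁ * (y₁ : ℤ) + n₂ * (y₂ : ℤ) + n₃ * (y₃ : ℤ))),
      rot3 p (fun x₂ x₃ x₁ => eChar p ((a : ℤ) * ((x₁ : ℤ) * (y₁ : ℤ) ^ 2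
        + (x₂ : ℤ) * (y₂ : ℤ) ^ 2 + (x₃ : ℤ) * (y₃ : ℤ) ^ 2)
        + m₁ * (x₁ : ℤ) + m₂ * (x₂ : ℤ) + m₃ * (x₃ : ℤ)
        + n₁ * (y₁ : ℤ) + n₂ * (y₂ : ℤ) + n₃ * (y₃ : ℤ)))]
    refine Finset.sum_eq_zero fun x₃ _ => Finset.sum_eq_zero fun x₁ _ => ?_
    refine (Finset.sum_congr rfl fun x₂ _ => ?_).trans
      (sum_eChar_linear p hq ((a : ℤ) * (y₂ : ℤ) ^ 2 + m₂)
        ((a : ℤ) * ((x₁ : ℤ) * (y₁ : ℤ) ^ 2 + (x₃ : ℤ) * (y₃ : ℤ) ^ 2)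
          + m₁ * (x₁ : ℤ) + m₃ * (x₃ : ℤ) + n₁ * (y₁ : ℤ) + n₂ * (y₂ : ℤ) + n₃ * (y₃ : ℤ))
        (hk (y₂ : ℤ)))
    congr 1
    ring
  · refine Finset.sum_eq_zero fun x₁ _ => Finset.sum_eq_zero fun x₂ _ => ?_
    refine (Finset.sum_congr rfl fun x₃ _ => ?_).trans
      (sum_eChar_linear p hq ((a : ℤ) * (y₃ : ℤ) ^ 2 + m₃)
        ((a : ℤ) * ((x₁ : ℤ) * (y₁ : ℤ) ^ 2 + (x₂ : ℤ) * (y₂ : ℤ) ^ 2)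
          + m₁ * (x₁ : ℤ) + m₂ * (x₂ : ℤ) + n₁ * (y₁ : ℤ) + n₂ * (y₂ : ℤ) + n₃ * (y₃ : ℤ))
        (hk (y₃ : ℤ)))
    congr 1
    ring
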